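/- Let h_1(x) = −3x_{12} + 4x_{13} − x_{23} − x_{14} + 3x_{24} − 2x_{34} and h_2(x) = 4x_{12} − 6x_{13} + 3x_{23} + 2x_{14} − 5x_{24} + 2x_{34}. Then the set of real homogeneous quadratic polynomials q in the six variables such that (i) q = ℓ_1·x_{14} + ℓ_2·x_{23} + α·(x_{12}x_{34} − x_{13}x_{24}) for some α ∈ ℝ and homogeneous linear forms ℓ_1, ℓ_2, (ii) q vanishes identically on each of the four linear subspaces {x_{12} = x_{13} = x_{23} = x_{24} = 0}, {x_{13} = x_{23} = x_{24} = x_{34} = 0}, {x_{12} = x_{13} = x_{14} = x_{24} = 0}, {x_{13} = x_{14} = x_{24} = x_{34} = 0}, and (iii) q(x) = 0 for every x ∈ ℝ^6 with x_{12} = x_{34} = 0, h_1(x) = h_2(x) = 0 and qq(x) = 0, is exactly the four-dimensional vector space spanned by q_1 = 2x_{13}x_{24} + 4x_{23}x_{24} + x_{14}x_{24} − 2x_{12}x_{34}, q_2 = 2x_{23}x_{14} + 4x_{23}x_{24} + x_{14}x_{24}, q_3 = 4x_{13}x_{14} − 4x_{23}x_{24} + x_{14}x_{24}, q_4 = 12x_{13}x_{23}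 + 12x_{23}x_{24} + x_{14}x_{24}. Moreover, qq = (q_2 − q_1)/2 lies in this space, so the quotient of this space by the line spanned by qq is three-dimensional. -/

import Mathlib

open MvPolynomial

/-- Plücker quadric `x₁₂x₃₄ − x₁₃x₂₄ + x₁₄x₂₃`; coordinates of `ℝ^6` are ordered as
`(x₁₂, x₁₃, x₂₃, x₁₄, x₂₄, x₃₄)`, i.e. indices `0,…,5`. -/
noncomputable def qq11 : MvPolynomial (Fin 6) ℝ := X 0 * X 5 - X 1 * X 4 + X 3 * X 2

/-- `h₁ = −3x₁₂ + 4x₁₃ − x₂₃ − x₁₄ + 3x₂₄ − 2x₃₄`. -/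
noncomputable def h111 : MvPolynomial (Fin 6) ℝ :=
  -(C 3 * X 0) + C 4 * X 1 - X 2 - X 3 + C 3 * X 4 - C 2 * X 5

/-- `h₂ = 4x₁₂ − 6x₁₃ + 3x₂₃ + 2x₁₄ − 5x₂₄ + 2x₃₄`. -/
noncomputable def h211 : MvPolynomial (Fin 6) ℝ :=
  C 4 * X 0 - C 6 * X 1 + C 3 * X 2 + C 2 * X 3 - C 5 * X 4 + C 2 * X 5

/-- `q₁ = 2x₁₃x₂₄ + 4x₂₃x₂₄ + x₁₄x₂₄ − 2x₁₂x₃₄`. -/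
noncomputable def q11_1 : MvPolynomial (Fin 6) ℝ :=
  C 2 * X 1 * X 4 + C 4 * X 2 * X 4 + X 3 * X 4 - C 2 * X 0 * X 5

/-- `q₂ = 2x₂₃x₁₄ + 4x₂₃x₂₄ + x₁₄x₂₄`. -/
noncomputable def q11_2 : MvPolynomial (Fin 6) ℝ :=
  C 2 * X 2 * X 3 + C 4 * X 2 * X 4 + X 3 * X 4

/-- `q₃ = 4x₁₃x₁₄ − 4x₂₃x₂₄ + x₁₄x₂₄`. -/
noncomputable def q11_3 : MvPolynomial (Fin 6) ℝ :=
  C 4 * X 1 * X 3 - C 4 * X 2 * X 4 + X 3 * X 4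

/-- `q₄ = 12x₁₃x₂₃ + 12x₂₃x₂₄ + x₁₄x₂₄`. -/
noncomputable def q11_4 : MvPolynomial (Fin 6) ℝ :=
  C 12 * X 1 * X 2 + C 12 * X 2 * X 4 + X 3 * X 4

/- ### Auxiliary lemmas -/

lemma v5aux (a b c d e f : ℝ) : (![a,b,c,d,e,f] : Fin 6 → ℝ) 5 = f := rfl

lemma deg1_class (d : Fin 6 →₀ ℕ) (hd : Finsupp.degree d = 1) :
    ∃ i, d = Finsupp.single i 1 := by
  have hs : Finsupp.degree d = ∑ i : Fin 6, d i := by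
    rw [Finsupp.degree]
    exact Finset.sum_subset (Finset.subset_univ _)
      (fun i _ hi => Finsupp.notMem_support_iff.mp hi)
  rw [hs, Fin.sum_univ_six] at hd
  have h : (d 0 = 1 ∧ d 1 = 0 ∧ d 2 = 0 ∧ d 3 = 0 ∧ d 4 = 0 ∧ d 5 = 0) ∨
      (d 1 = 1 ∧ d 0 = 0 ∧ d 2 = 0 ∧ d 3 = 0 ∧ d 4 = 0 ∧ d 5 = 0) ∨
      (d 2 = 1 ∧ d 0 = 0 ∧ d 1 = 0 ∧ d 3 = 0 ∧ d 4 = 0 ∧ d 5 = 0) ∨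
      (d 3 = 1 ∧ d 0 = 0 ∧ d 1 = 0 ∧ d 2 = 0 ∧ d 4 = 0 ∧ d 5 = 0) ∨
      (d 4 = 1 ∧ d 0 = 0 ∧ d 1 = 0 ∧ d 2 = 0 ∧ d 3 = 0 ∧ d 5 = 0) ∨
      (d 5 = 1 ∧ d 0 = 0 ∧ d 1 = 0 ∧ d 2 = 0 ∧ d 3 = 0 ∧ d 4 = 0) := by omega
  rcases h with h|h|h|h|h|h
  · exact ⟨0, Finsupp.ext fun j => by fin_cases j <;>
      simp [Finsupp.single_apply, h.1, h.2.1, h.2.2.1, h.2.2.2.1, h.2.2.2.2.1, h.2.2.2.2.2]⟩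
  · exact ⟨1, Finsupp.ext fun j => by fin_cases j <;>
      simp [Finsupp.single_apply, h.1, h.2.1, h.2.2.1, h.2.2.2.1, h.2.2.2.2.1, h.2.2.2.2.2]⟩
  · exact ⟨2, Finsupp.ext fun j => by fin_cases j <;>
      simp [Finsupp.single_apply, h.1, h.2.1, h.2.2.1, h.2.2.2.1, h.2.2.2.2.1, h.2.2.2.2.2]⟩
  · exact ⟨3, Finsupp.ext fun j => by fin_cases j <;>
      simp [Finsupp.single_apply, h.1, h.2.1, h.2.2.1, h.2.2.2.1, h.2.2.2.2.1, h.2.2.2.2.2]⟩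
  · exact ⟨4, Finsupp.ext fun j => by fin_cases j <;>
      simp [Finsupp.single_apply, h.1, h.2.1, h.2.2.1, h.2.2.2.1, h.2.2.2.2.1, h.2.2.2.2.2]⟩
  · exact ⟨5, Finsupp.ext fun j => by fin_cases j <;>
      simp [Finsupp.single_apply, h.1, h.2.1, h.2.2.1, h.2.2.2.1, h.2.2.2.2.1, h.2.2.2.2.2]⟩

/-- A homogeneous linear form is determined by its six coefficients. -/
lemma lin_form (ℓ : MvPolynomial (Fin 6) ℝ) (h : ℓ.IsHomogeneous 1) :
    ℓ = C (coeff (Finsupp.single 0 1) ℓ) * X 0 + C (coeff (Finsupp.single 1 1) ℓ) * X 1 +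
      C (coeff (Finsupp.single 2 1) ℓ) * X 2 + C (coeff (Finsupp.single 3 1) ℓ) * X 3 +
      C (coeff (Finsupp.single 4 1) ℓ) * X 4 + C (coeff (Finsupp.single 5 1) ℓ) * X 5 := by
  classical
  apply MvPolynomial.ext
  intro d
  by_cases hd : Finsupp.degree d = 1
  · obtain ⟨i, rfl⟩ := deg1_class d hd
    fin_cases i <;>
      simp [coeff_add, coeff_C_mul, coeff_X', Finsupp.single_eq_single_iff]
  · rw [h.coeff_eq_zero hd]
    have hne : ∀ j : Fin 6, ¬ (Finsupp.single j 1 = d) := by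
      intro j hj
      apply hd
      rw [← hj, Finsupp.degree_apply, Finsupp.support_single_ne_zero _ one_ne_zero]
      simp
    simp [coeff_add, coeff_C_mul, coeff_X', hne]

lemma mem_span_quad {p1 p2 p3 p4 x : MvPolynomial (Fin 6) ℝ}
    (h : x ∈ Submodule.span ℝ {p1, p2, p3, p4}) :
    ∃ c1 c2 c3 c4 : ℝ, x = c1 • p1 + c2 • p2 + c3 • p3 + c4 • p4 := by
  rw [Submodule.mem_span_insert] at h
  obtain ⟨c1, y1, hy1, rfl⟩ := h
  rw [Submodule.mem_span_insert] at hy1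
  obtain ⟨c2, y2, hy2, rfl⟩ := hy1
  rw [Submodule.mem_span_insert] at hy2
  obtain ⟨c3, y3, hy3, rfl⟩ := hy2
  rw [Submodule.mem_span_singleton] at hy3
  obtain ⟨c4, rfl⟩ := hy3
  exact ⟨c1, c2, c3, c4, by ring⟩

/-- The hard inclusion: any quadric satisfying all the conditions lies in the span. -/
lemma hard_dir (q : MvPolynomial (Fin 6) ℝ) (α a0 a1 a2 a3 a4 a5 b0 b1 b2 b3 b4 b5 : ℝ)
    (hq : q = (C a0 * X 0 + C a1 * X 1 + C a2 * X 2 + C a3 * X 3 + C a4 * X 4 + C a5 * X 5) * X 3 +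
      (C b0 * X 0 + C b1 * X 1 + C b2 * X 2 + C b3 * X 3 + C b4 * X 4 + C b5 * X 5) * X 2 +
      C α * (X 0 * X 5 - X 1 * X 4))
    (hA : ∀ x : Fin 6 → ℝ, x 0 = 0 → x 1 = 0 → x 2 = 0 → x 4 = 0 → eval x q = 0)
    (hB : ∀ x : Fin 6 → ℝ, x 1 = 0 → x 2 = 0 → x 4 = 0 → x 5 = 0 → eval x q = 0)
    (hC : ∀ x : Fin 6 → ℝ, x 0 = 0 → x 1 = 0 → x 3 = 0 → x 4 = 0 → eval x q = 0)
    (hD : ∀ x : Fin 6 → ℝ, x 1 = 0 → x 3 = 0 → x 4 = 0 → x 5 = 0 → eval x q = 0)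
    (hE : ∀ x : Fin 6 → ℝ, x 0 = 0 → x 5 = 0 → eval x h111 = 0 → eval x h211 = 0 →
          eval x qq11 = 0 → eval x q = 0) :
    q ∈ Submodule.span ℝ ({q11_1, q11_2, q11_3, q11_4} : Set (MvPolynomial (Fin 6) ℝ)) := by
  have e1 := hA ![0,0,0,1,0,0] rfl rfl rfl rfl
  rw [hq] at e1; simp [v5aux] at e1
  have e2 := hA ![0,0,0,1,0,1] rfl rfl rfl rfl
  rw [hq] at e2; simp [v5aux, e1] at e2
  have e3 := hB ![1,0,0,1,0,0] rfl rfl rfl rfl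
  rw [hq] at e3; simp [v5aux, e1] at e3
  have e4 := hC ![0,0,1,0,0,0] rfl rfl rfl rfl
  rw [hq] at e4; simp [v5aux] at e4
  have e5 := hC ![0,0,1,0,0,1] rfl rfl rfl rfl
  rw [hq] at e5; simp [v5aux, e4] at e5
  have e6 := hD ![1,0,1,0,0,0] rfl rfl rfl rfl
  rw [hq] at e6; simp [v5aux, e4] at e6
  set r : ℝ := Real.sqrt 33 with hrdef
  have hr : r ^ 2 = 33 := Real.sq_sqrt (by norm_num)
  have hrpos : 0 < r := Real.sqrt_pos.mpr (by norm_num)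
  have ep := hE ![0, (1+r)/4, 1, -2*((1+r)/4)-4, -2*((1+r)/4)-1, 0] rfl rfl
    (by simp [h111, v5aux]; ring) (by simp [h211, v5aux]; ring)
    (by simp [qq11, v5aux]; linear_combination hr/8)
  rw [hq] at ep; simp [v5aux, e1, e2, e3, e4, e5, e6] at ep
  have em := hE ![0, (1-r)/4, 1, -2*((1-r)/4)-4, -2*((1-r)/4)-1, 0] rfl rfl
    (by simp [h111, v5aux]; ring) (by simp [h211, v5aux]; ring)
    (by simp [qq11, v5aux]; linear_combination hr/8)
  rw [hq] at em; simp [v5aux, e1, e2, e3, e4, e5, e6] at em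
  have k1 : r * (-5*a1 - 2*a2 - 2*b3 + 12*a4 + b1 - 2*b4 + 2*α) = 0 := by
    linear_combination 2*ep - 2*em
  have hE1 : -5*a1 - 2*a2 - 2*b3 + 12*a4 + b1 - 2*b4 + 2*α = 0 := by
    rcases mul_eq_zero.mp k1 with h | h
    · exact absurd h hrpos.ne'
    · exact h
  have hE2 : -4*a1 - 4*a2 - 4*b3 + 12*a4 - b4 + 4*α = 0 := by
    linear_combination ep/2 + em/2 - hE1/4 + (a1/8 - a4/4 - α/8) * hr
  have ha4 : (12:ℝ) * a4 = -6*α + 6*(a2+b3) + 3*a1 + b1 := by linarith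
  have hb4 : (12:ℝ) * b4 = -24*α + 24*(a2+b3) - 12*a1 + 12*b1 := by linarith
  rw [← Submodule.smul_mem_iff _ (show (12:ℝ) ≠ 0 by norm_num)]
  have hA4C := congrArg (MvPolynomial.C (σ := Fin 6) (R := ℝ)) ha4
  have hB4C := congrArg (MvPolynomial.C (σ := Fin 6) (R := ℝ)) hb4
  simp only [map_mul, map_add, map_neg, map_sub, map_ofNat] at hA4C hB4C
  have hrep : (12:ℝ) • q = (-6*α) • q11_1 + (6*(a2+b3)) • q11_2 + (3*a1) • q11_3 + b1 • q11_4 := by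
    rw [hq, e1, e2, e3, e4, e5, e6]
    simp only [smul_eq_C_mul, q11_1, q11_2, q11_3, q11_4, map_mul, map_neg, map_add, map_ofNat,
      map_zero]
    linear_combination (X 3 * X 4) * hA4C + (X 2 * X 4) * hB4C
  rw [hrep]
  refine Submodule.add_mem _ (Submodule.add_mem _ (Submodule.add_mem _ ?_ ?_) ?_) ?_ <;>
    exact Submodule.smul_mem _ _ (Submodule.subset_span (by simp))

set_option maxHeartbeats 2000000 in
theorem stmt11 :
    {q : MvPolynomial (Fin 6) ℝ |
        q.IsHomogeneous 2 ∧
        (∃ (α : ℝ) (ℓ₁ ℓ₂ : MvPolynomial (Fin 6) ℝ), ℓ₁.IsHomogeneous 1 ∧ ℓ₂.IsHomogeneous 1 ∧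
          q = ℓ₁ * X 3 + ℓ₂ * X 2 + C α * (X 0 * X 5 - X 1 * X 4)) ∧
        (∀ x : Fin 6 → ℝ, x 0 = 0 → x 1 = 0 → x 2 = 0 → x 4 = 0 → eval x q = 0) ∧
        (∀ x : Fin 6 → ℝ, x 1 = 0 → x 2 = 0 → x 4 = 0 → x 5 = 0 → eval x q = 0) ∧
        (∀ x : Fin 6 → ℝ, x 0 = 0 → x 1 = 0 → x 3 = 0 → x 4 = 0 → eval x q = 0) ∧
        (∀ x : Fin 6 → ℝ, x 1 = 0 → x 3 = 0 → x 4 = 0 → x 5 = 0 → eval x q = 0) ∧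
        (∀ x : Fin 6 → ℝ, x 0 = 0 → x 5 = 0 → eval x h111 = 0 → eval x h211 = 0 →
          eval x qq11 = 0 → eval x q = 0)} =
      ↑(Submodule.span ℝ {q11_1, q11_2, q11_3, q11_4}) ∧
    LinearIndependent ℝ ![q11_1, q11_2, q11_3, q11_4] ∧
    (2 : ℝ) • qq11 = q11_2 - q11_1 ∧
    Module.finrank ℝ
        ↥(Submodule.map (Submodule.span ℝ {qq11}).mkQ
          (Submodule.span ℝ {q11_1, q11_2, q11_3, q11_4})) = 3 := by
  refine ⟨?_, ?_, ?_, ?_⟩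
  · -- the set equality
    ext q
    constructor
    · rintro ⟨hhom, ⟨α, ℓ₁, ℓ₂, hℓ₁, hℓ₂, hq⟩, hA, hB, hC, hD, hE⟩
      rw [lin_form ℓ₁ hℓ₁, lin_form ℓ₂ hℓ₂] at hq
      exact hard_dir q α _ _ _ _ _ _ _ _ _ _ _ _ hq hA hB hC hD hE
    · intro hmem
      obtain ⟨c1, c2, c3, c4, hq⟩ := mem_span_quad hmem
      have homX : ∀ i j : Fin 6, ((X i * X j : MvPolynomial (Fin 6) ℝ)).IsHomogeneous 2 :=
        fun i j => (isHomogeneous_X _ i).mul (isHomogeneous_X _ j)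
      have homCX : ∀ (c : ℝ) (i j : Fin 6),
          ((C c * X i * X j : MvPolynomial (Fin 6) ℝ)).IsHomogeneous 2 :=
        fun c i j => (isHomogeneous_C_mul_X c i).mul (isHomogeneous_X _ j)
      refine ⟨?_, ?_, ?_, ?_, ?_, ?_, ?_⟩
      · rw [hq]
        refine MvPolynomial.IsHomogeneous.add (MvPolynomial.IsHomogeneous.add
          (MvPolynomial.IsHomogeneous.add ?_ ?_) ?_) ?_
        · rw [smul_eq_C_mul, q11_1]
          exact (((homCX 2 1 4).add (homCX 4 2 4)).add (homX 3 4)).sub (homCX 2 0 5) |>.C_mul c1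
        · rw [smul_eq_C_mul, q11_2]
          exact (((homCX 2 2 3).add (homCX 4 2 4)).add (homX 3 4)).C_mul c2
        · rw [smul_eq_C_mul, q11_3]
          exact (((homCX 4 1 3).sub (homCX 4 2 4)).add (homX 3 4)).C_mul c3
        · rw [smul_eq_C_mul, q11_4]
          exact (((homCX 12 1 2).add (homCX 12 2 4)).add (homX 3 4)).C_mul c4
      · refine ⟨-2*c1, C c1 * X 4 + C c2 * (C 2 * X 2 + X 4) + C c3 * (C 4 * X 1 + X 4)
          + C c4 * X 4,
          C c1 * (C 4 * X 4) + C c2 * (C 4 * X 4) + C c3 * (C (-4) * X 4)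
            + C c4 * (C 12 * X 1 + C 12 * X 4), ?_, ?_, ?_⟩
        · apply MvPolynomial.IsHomogeneous.add
          apply MvPolynomial.IsHomogeneous.add
          apply MvPolynomial.IsHomogeneous.add
          · exact (isHomogeneous_X _ 4).C_mul c1
          · exact (((isHomogeneous_C_mul_X (2:ℝ) 2).add (isHomogeneous_X _ 4)).C_mul c2)
          · exact (((isHomogeneous_C_mul_X (4:ℝ) 1).add (isHomogeneous_X _ 4)).C_mul c3)
          · exact (isHomogeneous_X _ 4).C_mul c4
        · apply MvPolynomial.IsHomogeneous.add
          apply MvPolynomial.IsHomogeneous.add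
          apply MvPolynomial.IsHomogeneous.add
          · exact ((isHomogeneous_C_mul_X (4:ℝ) 4).C_mul c1)
          · exact ((isHomogeneous_C_mul_X (4:ℝ) 4).C_mul c2)
          · exact ((isHomogeneous_C_mul_X (-4:ℝ) 4).C_mul c3)
          · exact (((isHomogeneous_C_mul_X (12:ℝ) 1).add
              (isHomogeneous_C_mul_X (12:ℝ) 4)).C_mul c4)
        · rw [hq]
          simp only [smul_eq_C_mul, q11_1, q11_2, q11_3, q11_4, map_mul, map_neg, map_ofNat]
          ring
      · intro x hx0 hx1 hx2 hx4
        rw [hq]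
        simp [q11_1, q11_2, q11_3, q11_4, hx0, hx1, hx2, hx4]
      · intro x hx1 hx2 hx4 hx5
        rw [hq]
        simp [q11_1, q11_2, q11_3, q11_4, hx1, hx2, hx4, hx5]
      · intro x hx0 hx1 hx3 hx4
        rw [hq]
        simp [q11_1, q11_2, q11_3, q11_4, hx0, hx1, hx3, hx4]
      · intro x hx1 hx3 hx4 hx5
        rw [hq]
        simp [q11_1, q11_2, q11_3, q11_4, hx1, hx3, hx4, hx5]
      · intro x hx0 hx5 hh1 hh2 hqq
        simp [h111, hx0, hx5] at hh1
        simp [h211, hx0, hx5] at hh2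
        simp [qq11, hx0, hx5] at hqq
        have h3 : x 3 = -2 * x 1 - 4 * x 2 := by linarith
        have h4 : x 4 = -2 * x 1 - x 2 := by linarith
        rw [hq]
        simp [q11_1, q11_2, q11_3, q11_4, hx0, hx5]
        rw [h3, h4] at hqq ⊢
        linear_combination (2*c2 - 2*c3 + 2*c4) * hqq
  · -- linear independence
    rw [Fintype.linearIndependent_iff]
    intro g hg
    have h1 := congrArg (eval ![1,0,0,0,0,1]) hg
    have h2 := congrArg (eval ![0,0,1,1,0,0]) hg
    have h3 := congrArg (eval ![0,1,0,1,0,0]) hg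
    have h4 := congrArg (eval ![0,1,1,0,0,0]) hg
    simp [Fin.sum_univ_four, smul_eq_C_mul, q11_1, q11_2, q11_3, q11_4, v5aux] at h1 h2 h3 h4
    intro i
    fin_cases i <;> simp <;> linarith
  · rw [qq11, q11_1, q11_2, smul_eq_C_mul]; ring
  · -- the finrank computation
    set K := Submodule.span ℝ ({qq11} : Set (MvPolynomial (Fin 6) ℝ)) with hK
    have hmk2 : K.mkQ q11_2 = K.mkQ q11_1 := by
      rw [Submodule.mkQ_apply, Submodule.mkQ_apply, Submodule.Quotient.eq]
      have : q11_2 - q11_1 = (2:ℝ) • qq11 := by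
        rw [qq11, q11_1, q11_2, smul_eq_C_mul]; ring
      rw [this]
      exact Submodule.smul_mem _ _ (Submodule.subset_span rfl)
    have himg : Submodule.map K.mkQ (Submodule.span ℝ {q11_1, q11_2, q11_3, q11_4}) =
        Submodule.span ℝ (Set.range ![K.mkQ q11_1, K.mkQ q11_3, K.mkQ q11_4]) := by
      rw [Submodule.map_span]
      apply le_antisymm
      · rw [Submodule.span_le]
        rintro y ⟨p, hp, rfl⟩
        rcases hp with rfl | rfl | rfl | rfl
        · exact Submodule.subset_span ⟨0, rfl⟩
        · rw [hmk2]; exact Submodule.subset_span ⟨0, rfl⟩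
        · exact Submodule.subset_span ⟨1, rfl⟩
        · exact Submodule.subset_span ⟨2, rfl⟩
      · rw [Submodule.span_le]
        rintro y ⟨i, rfl⟩
        fin_cases i
        · exact Submodule.subset_span ⟨q11_1, by simp, rfl⟩
        · exact Submodule.subset_span ⟨q11_3, by simp, rfl⟩
        · exact Submodule.subset_span ⟨q11_4, by simp, rfl⟩
    rw [himg]
    rw [finrank_span_eq_card]
    · simp
    · rw [Fintype.linearIndependent_iff]
      intro g hg
      have hmem : g 0 • q11_1 + g 1 • q11_3 + g 2 • q11_4 ∈ K := by
        rw [← Submodule.Quotient.mk_eq_zero]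
        have : Submodule.Quotient.mk (p := K) (g 0 • q11_1 + g 1 • q11_3 + g 2 • q11_4) =
            g 0 • K.mkQ q11_1 + g 1 • K.mkQ q11_3 + g 2 • K.mkQ q11_4 := by
          simp [Submodule.mkQ_apply]
        rw [this, ← hg, Fin.sum_univ_three]
        rfl
      rw [hK, Submodule.mem_span_singleton] at hmem
      obtain ⟨t, ht⟩ := hmem
      have h1 := congrArg (eval ![0,1,0,1,0,0]) ht
      have h2 := congrArg (eval ![0,1,1,0,0,0]) ht
      have h3 := congrArg (eval ![1,0,0,0,0,1]) ht
      have h4 := congrArg (eval ![0,0,1,1,0,0]) ht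
      simp [smul_eq_C_mul, q11_1, q11_2, q11_3, q11_4, qq11, v5aux] at h1 h2 h3 h4
      intro i
      fin_cases i <;> simp <;> linarith
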